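/- Define h : ℝ → ℝ by h(r) = (sinh(√6·r) − 9·sinh((4/√6)·r) + 45·sinh((2/√6)·r) − (60/√6)·r)·exp(−(6·√3/√7)·r). Then h(r) > 0 for all r > 0, h(r) → 0 as r → ∞, and h attains a global maximum on (0, ∞); that is, there exists C > 0 such that h(C) ≥ h(r) for all r > 0. -/

import Mathlib

open Real Filter

private noncomputable def Qf (s : ℝ) : ℝ :=
  Real.sinh (6*s) - 9*Real.sinh (4*s) + 45*Real.sinh (2*s) - 60*s

private noncomputable def Qone (s : ℝ) : ℝ :=
  6*Real.cosh (6*s) - 36*Real.cosh (4*s) + 90*Real.cosh (2*s) - 60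

private noncomputable def Qtwo (s : ℝ) : ℝ :=
  36*Real.sinh (6*s) - 144*Real.sinh (4*s) + 180*Real.sinh (2*s)

private lemma hasDerivAt_Qf (s : ℝ) : HasDerivAt Qf (Qone s) s := by
  have h6 : HasDerivAt (fun x : ℝ => Real.sinh (6*x)) (Real.cosh (6*s) * (6*1)) s :=
    (Real.hasDerivAt_sinh (6*s)).comp s ((hasDerivAt_id s).const_mul 6)
  have h4 : HasDerivAt (fun x : ℝ => Real.sinh (4*x)) (Real.cosh (4*s) * (4*1)) s :=
    (Real.hasDerivAt_sinh (4*s)).comp s ((hasDerivAt_id s).const_mul 4)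
  have h2 : HasDerivAt (fun x : ℝ => Real.sinh (2*x)) (Real.cosh (2*s) * (2*1)) s :=
    (Real.hasDerivAt_sinh (2*s)).comp s ((hasDerivAt_id s).const_mul 2)
  have hl : HasDerivAt (fun x : ℝ => (60:ℝ)*x) (60*1) s := (hasDerivAt_id s).const_mul 60
  have := ((h6.sub (h4.const_mul 9)).add (h2.const_mul 45)).sub hl
  refine this.congr_deriv ?_
  unfold Qone; ring

private lemma hasDerivAt_Qone (s : ℝ) : HasDerivAt Qone (Qtwo s) s := by
  have h6 : HasDerivAt (fun x : ℝ => Real.cosh (6*x)) (Real.sinh (6*s) * (6*1)) s :=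
    (Real.hasDerivAt_cosh (6*s)).comp s ((hasDerivAt_id s).const_mul 6)
  have h4 : HasDerivAt (fun x : ℝ => Real.cosh (4*x)) (Real.sinh (4*s) * (4*1)) s :=
    (Real.hasDerivAt_cosh (4*s)).comp s ((hasDerivAt_id s).const_mul 4)
  have h2 : HasDerivAt (fun x : ℝ => Real.cosh (2*x)) (Real.sinh (2*s) * (2*1)) s :=
    (Real.hasDerivAt_cosh (2*s)).comp s ((hasDerivAt_id s).const_mul 2)
  have := (((h6.const_mul 6).sub (h4.const_mul 36)).add (h2.const_mul 90)).sub
    (hasDerivAt_const s (60:ℝ))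
  refine this.congr_deriv ?_
  unfold Qtwo; ring

private lemma Qtwo_eq (s : ℝ) :
    Qtwo s = 144 * Real.sinh (2*s) * (Real.cosh (2*s) - 1)^2 := by
  unfold Qtwo
  have e3 : Real.sinh (6*s) = 4 * Real.sinh (2*s)^3 + 3 * Real.sinh (2*s) := by
    rw [show (6:ℝ)*s = 3*(2*s) by ring, Real.sinh_three_mul]
  have e2 : Real.sinh (4*s) = 2 * Real.sinh (2*s) * Real.cosh (2*s) := by
    rw [show (4:ℝ)*s = 2*(2*s) by ring, Real.sinh_two_mul]
  have hc := Real.cosh_sq (2*s)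
  linear_combination 36*e3 - 144*e2 + (-144 * Real.sinh (2*s)) * hc

private lemma Qtwo_pos {s : ℝ} (hs : 0 < s) : 0 < Qtwo s := by
  rw [Qtwo_eq]
  have hx : 0 < Real.sinh (2*s) := Real.sinh_pos_iff.2 (by linarith)
  have hc : 1 < Real.cosh (2*s) := Real.one_lt_cosh.2 (by positivity)
  have : 0 < (Real.cosh (2*s) - 1)^2 := pow_pos (by linarith) 2
  positivity

private lemma Qone_pos {s : ℝ} (hs : 0 < s) : 0 < Qone s := by
  have hmono : StrictMonoOn Qone (Set.Ici 0) := by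
    apply strictMonoOn_of_deriv_pos (convex_Ici 0)
    · exact Continuous.continuousOn (by unfold Qone; fun_prop)
    · intro x hx
      rw [interior_Ici, Set.mem_Ioi] at hx
      rw [(hasDerivAt_Qone x).deriv]
      exact Qtwo_pos hx
  have h0 : Qone 0 = 0 := by unfold Qone; norm_num
  have := hmono Set.self_mem_Ici (Set.mem_Ici.2 hs.le) hs
  linarith

private lemma Qf_pos {s : ℝ} (hs : 0 < s) : 0 < Qf s := by
  have hmono : StrictMonoOn Qf (Set.Ici 0) := by
    apply strictMonoOn_of_deriv_pos (convex_Ici 0)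
    · exact Continuous.continuousOn (by unfold Qf; fun_prop)
    · intro x hx
      rw [interior_Ici, Set.mem_Ioi] at hx
      rw [(hasDerivAt_Qf x).deriv]
      exact Qone_pos hx
  have h0 : Qf 0 = 0 := by unfold Qf; norm_num
  have := hmono Set.self_mem_Ici (Set.mem_Ici.2 hs.le) hs
  linarith

private lemma exp_mul_tendsto {c : ℝ} (hc : c < 0) :
    Tendsto (fun r : ℝ => Real.exp (c * r)) atTop (nhds 0) := by
  have h1 : Tendsto (fun r : ℝ => (-c) * r) atTop atTop :=
    tendsto_id.const_mul_atTop (by linarith)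
  have := Real.tendsto_exp_neg_atTop_nhds_zero.comp h1
  refine this.congr fun r => ?_
  simp [Function.comp, neg_mul]

private lemma sinh_exp_tendsto {a b : ℝ} (hba : b < a) (hba' : -b < a) :
    Tendsto (fun r : ℝ => Real.sinh (b * r) * Real.exp (-a * r)) atTop (nhds 0) := by
  have key : ∀ r : ℝ, Real.sinh (b*r) * Real.exp (-a*r)
      = (Real.exp ((b - a)*r) - Real.exp ((-b - a)*r)) / 2 := by
    intro r
    rw [Real.sinh_eq, div_mul_eq_mul_div, sub_mul, ← Real.exp_add, ← Real.exp_add]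
    ring_nf
  have T1 := exp_mul_tendsto (c := b - a) (by linarith)
  have T2 := exp_mul_tendsto (c := -b - a) (by linarith)
  have := (T1.sub T2).div_const 2
  simp only [sub_zero, zero_div] at this
  exact this.congr fun r => (key r).symm

private lemma rexp_tendsto {a : ℝ} (ha : 0 < a) :
    Tendsto (fun r : ℝ => r * Real.exp (-a * r)) atTop (nhds 0) := by
  have h1 : Tendsto (fun r : ℝ => a * r) atTop atTop := tendsto_id.const_mul_atTop ha
  have h2 := (Real.tendsto_pow_mul_exp_neg_atTop_nhds_zero 1).comp h1
  have h3 := h2.const_mul (1/a)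
  rw [mul_zero] at h3
  refine h3.congr fun r => ?_
  simp only [Function.comp, pow_one]
  field_simp

theorem einstein_radius_function (h : ℝ → ℝ)
    (hdef : ∀ r : ℝ, h r =
      (Real.sinh (Real.sqrt 6 * r) - 9 * Real.sinh ((4 / Real.sqrt 6) * r)
          + 45 * Real.sinh ((2 / Real.sqrt 6) * r) - (60 / Real.sqrt 6) * r)
        * Real.exp (-(6 * Real.sqrt 3 / Real.sqrt 7) * r)) :
    (∀ r : ℝ, 0 < r → 0 < h r) ∧
      Filter.Tendsto h Filter.atTop (nhds 0) ∧
      ∃ C : ℝ, 0 < C ∧ ∀ r : ℝ, 0 < r → h r ≤ h C := by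
  have hs6 : (0:ℝ) < Real.sqrt 6 := Real.sqrt_pos.2 (by norm_num)
  have h66 : Real.sqrt 6 * Real.sqrt 6 = 6 := Real.mul_self_sqrt (by norm_num)
  have sq6 : Real.sqrt 6 ^ 2 = 6 := Real.sq_sqrt (by norm_num)
  set a : ℝ := 6 * Real.sqrt 3 / Real.sqrt 7 with ha_def
  have hs7 : (0:ℝ) < Real.sqrt 7 := Real.sqrt_pos.2 (by norm_num)
  have hs3 : (0:ℝ) < Real.sqrt 3 := Real.sqrt_pos.2 (by norm_num)
  have sq3 : Real.sqrt 3 ^ 2 = 3 := Real.sq_sqrt (by norm_num)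
  have sq7 : Real.sqrt 7 ^ 2 = 7 := Real.sq_sqrt (by norm_num)
  have h37 : 3 * Real.sqrt 7 < 6 * Real.sqrt 3 := by nlinarith [sq3, sq7, hs3, hs7]
  have ha3 : 3 < a := by
    rw [ha_def, lt_div_iff₀ hs7]; linarith
  have ha0 : 0 < a := by linarith
  have hb1 : Real.sqrt 6 < 3 := by
    nlinarith [h66, hs6]
  have hb2 : 4 / Real.sqrt 6 < Real.sqrt 6 := by
    rw [div_lt_iff₀ hs6]; nlinarith [h66]
  have hb3 : 2 / Real.sqrt 6 < Real.sqrt 6 := by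
    rw [div_lt_iff₀ hs6]; nlinarith [h66]
  -- Part 1
  have hQh : ∀ r : ℝ, h r = Qf (r / Real.sqrt 6) * Real.exp (-a * r) := by
    intro r
    rw [hdef r]
    congr 1
    unfold Qf
    rw [show (6:ℝ) * (r / Real.sqrt 6) = Real.sqrt 6 * r by
        field_simp; linear_combination (-r) * sq6,
      show (4:ℝ) * (r / Real.sqrt 6) = 4 / Real.sqrt 6 * r by ring,
      show (2:ℝ) * (r / Real.sqrt 6) = 2 / Real.sqrt 6 * r by ring]
    ring
  have part1 : ∀ r : ℝ, 0 < r → 0 < h r := by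
    intro r hr
    rw [hQh r]
    exact mul_pos (Qf_pos (div_pos hr hs6)) (Real.exp_pos _)
  -- Part 2
  have hfun : h = fun r => Real.sinh (Real.sqrt 6 * r) * Real.exp (-a*r)
      - 9 * (Real.sinh ((4/Real.sqrt 6)*r) * Real.exp (-a*r))
      + 45 * (Real.sinh ((2/Real.sqrt 6)*r) * Real.exp (-a*r))
      - (60/Real.sqrt 6) * (r * Real.exp (-a*r)) := by
    funext r; rw [hdef r]; ring
  have T1 := sinh_exp_tendsto (b := Real.sqrt 6) (a := a) (by linarith) (by linarith)
  have T2 := sinh_exp_tendsto (b := 4 / Real.sqrt 6) (a := a)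
    (by linarith) (by
      have h4p : (0:ℝ) < 4 / Real.sqrt 6 := by positivity
      linarith)
  have T3 := sinh_exp_tendsto (b := 2 / Real.sqrt 6) (a := a)
    (by linarith) (by
      have h2p : (0:ℝ) < 2 / Real.sqrt 6 := by positivity
      linarith)
  have T4 := rexp_tendsto ha0
  have part2 : Tendsto h atTop (nhds 0) := by
    rw [hfun]
    have := ((T1.sub (T2.const_mul 9)).add (T3.const_mul 45)).sub
      (T4.const_mul (60/Real.sqrt 6))
    simpa using this
  -- Part 3
  have hcont : Continuous h := by
    rw [hfun]
    fun_prop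
  have h1pos : 0 < h 1 := part1 1 one_pos
  have hev : ∀ᶠ r in atTop, h r < h 1 := part2.eventually_lt_const h1pos
  obtain ⟨M, hM⟩ := eventually_atTop.1 hev
  set M' : ℝ := max M 1 with hM'
  have hM'1 : (1:ℝ) ≤ M' := le_max_right _ _
  obtain ⟨C, hCmem, hCmax⟩ := (isCompact_Icc (a := (0:ℝ)) (b := M')).exists_isMaxOn
    ⟨0, by constructor <;> [rfl; linarith]⟩ hcont.continuousOn
  have hC1 : h 1 ≤ h C := hCmax ⟨by norm_num, hM'1⟩
  have h0 : h 0 = 0 := by rw [hdef 0]; simp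
  have hCpos : 0 < C := by
    rcases lt_or_eq_of_le hCmem.1 with hlt | heq
    · exact hlt
    · exfalso; rw [← heq, h0] at hC1; linarith
  refine ⟨part1, part2, C, hCpos, fun r hr => ?_⟩
  rcases le_or_gt r M' with hrM | hrM
  · exact hCmax ⟨hr.le, hrM⟩
  · have : h r < h 1 := hM r (le_trans (le_max_left _ _) hrM.le)
    linarith
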